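/- The rotation group SO(3) contains a subgroup that is free of rank 2. -/

import Mathlib

open scoped Pointwise

/-- `A` and `B` are `G`-equidecomposable: there are finite partitions
`A = A₁ ∪ … ∪ Aₙ` and `B = B₁ ∪ … ∪ Bₙ` into pairwise disjoint pieces and
`g₁, …, gₙ ∈ G` with `Bᵢ = gᵢ • Aᵢ`. -/
def EquidecompSets (G : Type*) {X : Type*} [Group G] [MulAction G X] (A B : Set X) : Prop :=
  ∃ (n : ℕ) (P : Fin n → Set X) (g : Fin n → G),
    Pairwise (Function.onFun Disjoint P) ∧ (⋃ i, P i) = A ∧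
    Pairwise (Function.onFun Disjoint fun i => g i • P i) ∧ (⋃ i, g i • P i) = B

/-- `E` is `G`-paradoxical: `E` is nonempty and splits into two disjoint pieces,
each `G`-equidecomposable with `E`. -/
def Paradoxical (G : Type*) {X : Type*} [Group G] [MulAction G X] (E : Set X) : Prop :=
  E.Nonempty ∧ ∃ A B : Set X, A ∪ B = E ∧ Disjoint A B ∧
    EquidecompSets G A E ∧ EquidecompSets G B E

abbrev E3 : Type := EuclideanSpace ℝ (Fin 3)
abbrev SO3 : Type := Matrix.specialOrthogonalGroup (Fin 3) ℝ

noncomputable instance : Group SO3 :=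
  { (inferInstance : Monoid SO3) with
    inv := fun A => ⟨star A.1, by
      refine ⟨Unitary.star_mem A.2.1, ?_⟩
      show (star A.1).det = 1
      have h : A.1.det = 1 := A.2.2
      rw [Matrix.star_eq_conjTranspose, Matrix.det_conjTranspose, h]
      simp⟩
    inv_mul_cancel := fun A => Subtype.ext (Matrix.mem_unitaryGroup_iff'.mp A.2.1) }

noncomputable instance : SMul SO3 E3 := ⟨fun g x => WithLp.toLp 2 (g.1.mulVec x)⟩

/-- `SO3` acts on `ℝ³` by rotation (matrix-vector multiplication). -/
noncomputable instance : MulAction SO3 E3 where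
  one_smul x := congrArg (WithLp.toLp 2) (Matrix.one_mulVec x.ofLp)
  mul_smul g h x := congrArg (WithLp.toLp 2) (Matrix.mulVec_mulVec x.ofLp g.1 h.1).symm

lemma SO3.smul_add (g : SO3) (x y : E3) : g • (x + y) = g • x + g • y :=
  congrArg (WithLp.toLp 2) (Matrix.mulVec_add g.1 x.ofLp y.ofLp)

lemma SO3.smul_neg (g : SO3) (x : E3) : g • (-x) = -(g • x) :=
  congrArg (WithLp.toLp 2) (Matrix.mulVec_neg x.ofLp g.1)

namespace SO3Free
open Matrix

abbrev Ltr := Fin 2 × Bool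

def iact : Ltr → ℤ × ℤ × ℤ → ℤ × ℤ × ℤ := fun x ⟨a,b,c⟩ =>
  if x.1 = 0 then
    (if x.2 then (3*a-4*b, 4*a+3*b, 5*c) else (3*a+4*b, -4*a+3*b, 5*c))
  else
    (if x.2 then (5*a, 3*b-4*c, 4*b+3*c) else (5*a, 3*b+4*c, -4*b+3*c))

def ivec : List Ltr → ℤ × ℤ × ℤ
  | [] => (0,1,0)
  | x :: L => iact x (ivec L)

def zact : Ltr → ZMod 5 × ZMod 5 × ZMod 5 → ZMod 5 × ZMod 5 × ZMod 5 := fun x ⟨a,b,c⟩ =>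
  if x.1 = 0 then
    (if x.2 then (3*a-4*b, 4*a+3*b, 5*c) else (3*a+4*b, -4*a+3*b, 5*c))
  else
    (if x.2 then (5*a, 3*b-4*c, 4*b+3*c) else (5*a, 3*b+4*c, -4*b+3*c))

def zcast (v : ℤ × ℤ × ℤ) : ZMod 5 × ZMod 5 × ZMod 5 :=
  ((v.1 : ZMod 5), (v.2.1 : ZMod 5), (v.2.2 : ZMod 5))

lemma zcast_iact (x : Ltr) (v : ℤ × ℤ × ℤ) : zcast (iact x v) = zact x (zcast v) := by
  obtain ⟨a, b, c⟩ := v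
  rcases x with ⟨i, e⟩
  by_cases h : i = 0 <;> cases e <;> simp [iact, zact, zcast, h]

def Invar : Ltr → ZMod 5 × ZMod 5 × ZMod 5 → Prop := fun x ⟨a,b,c⟩ =>
  b ≠ 0 ∧ (if x.1 = 0 then
    (c = 0 ∧ (if x.2 then a = 2*b else a = 3*b))
  else
    (a = 0 ∧ (if x.2 then c = 3*b else c = 2*b)))

instance (x : Ltr) (v : ZMod 5 × ZMod 5 × ZMod 5) : Decidable (Invar x v) := by
  unfold Invar; infer_instance

lemma Invar.b_ne {x : Ltr} {v : ZMod 5 × ZMod 5 × ZMod 5} (h : Invar x v) : v.2.1 ≠ 0 := by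
  obtain ⟨a, b, c⟩ := v; exact h.1

lemma inv_step : ∀ (x y : Ltr), ¬(x.1 = y.1 ∧ x.2 = !y.2) →
    ∀ v, Invar y v → Invar x (zact x v) := by
  set_option maxRecDepth 20000 in decide

lemma inv_base : ∀ x : Ltr, Invar x (zact x (0,1,0)) := by decide

lemma key : ∀ (L : List Ltr) (x : Ltr), FreeGroup.reduce (x :: L) = x :: L →
    Invar x (zcast (ivec (x :: L))) := by
  intro L
  induction L with
  | nil => intro x _; show Invar x (zcast (iact x (0,1,0)))
           rw [zcast_iact]; exact inv_base x
  | cons y L ih =>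
    intro x h
    have htail : FreeGroup.reduce (y :: L) = y :: L := by
      have hred := FreeGroup.reduce.red (L := y :: L)
      have : FreeGroup.Red (x :: y :: L) (x :: FreeGroup.reduce (y :: L)) :=
        FreeGroup.Red.cons_cons hred
      rw [← h] at this
      have := FreeGroup.reduce.min this
      rw [h] at this
      exact (List.cons.injEq _ _ _ _ ▸ this).2.symm
    have hnc : ¬(x.1 = y.1 ∧ x.2 = !y.2) := by
      rintro ⟨h1, h2⟩
      obtain ⟨a, e⟩ := x
      obtain ⟨a', e'⟩ := y
      simp only at h1 h2
      subst h1; subst h2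
      refine FreeGroup.reduce.not (L₁ := (a, !e') :: (a, e') :: L) (x := a) (b := !e')
        (L₂ := []) (L₃ := L) ?_
      rw [Bool.not_not]
      exact h
    have hz : zcast (ivec (x :: y :: L)) = zact x (zcast (ivec (y :: L))) := zcast_iact x _
    rw [hz]
    exact inv_step x y hnc _ (ih y htail)

noncomputable def rmat : Ltr → Matrix (Fin 3) (Fin 3) ℝ := fun x =>
  if x.1 = 0 then
    (if x.2 then !![3,-4,0;4,3,0;0,0,5] else !![3,4,0;-4,3,0;0,0,5])
  else
    (if x.2 then !![5,0,0;0,3,-4;0,4,3] else !![5,0,0;0,3,4;0,-4,3])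

lemma hmem (x : Ltr) : (5:ℝ)⁻¹ • rmat x ∈ Matrix.specialOrthogonalGroup (Fin 3) ℝ := by
  rw [Matrix.mem_specialOrthogonalGroup_iff]
  obtain ⟨i, e⟩ := x
  constructor
  · rw [Matrix.mem_orthogonalGroup_iff]
    fin_cases i <;> cases e <;>
    · ext a b
      fin_cases a <;> fin_cases b <;>
        simp [rmat, Matrix.mul_apply, Fin.sum_univ_succ, Matrix.star_eq_conjTranspose,
          Matrix.transpose_apply, Matrix.vecHead, Matrix.vecTail] <;> norm_num
  · fin_cases i <;> cases e <;>
      simp [rmat, Matrix.det_fin_three] <;> norm_num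

noncomputable def gen : Fin 2 → SO3 := fun i => ⟨(5:ℝ)⁻¹ • rmat (i, true), hmem _⟩

noncomputable def φ : FreeGroup (Fin 2) →* SO3 := FreeGroup.lift gen

lemma star_gen (i : Fin 2) : star ((gen i).1) = (5:ℝ)⁻¹ • rmat (i, false) := by
  fin_cases i <;>
  · ext a b
    fin_cases a <;> fin_cases b <;>
      simp [gen, rmat, Matrix.star_eq_conjTranspose, Matrix.transpose_apply,
        Matrix.conjTranspose_apply, Matrix.vecHead, Matrix.vecTail]

lemma gen_eq (x : Ltr) : (φ (FreeGroup.mk [x])).1 = (5:ℝ)⁻¹ • rmat x := by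
  obtain ⟨i, e⟩ := x
  cases e
  · have h1 : FreeGroup.mk [(i, false)] = (FreeGroup.of i)⁻¹ := by
      rw [show FreeGroup.of i = FreeGroup.mk [(i, true)] from rfl, FreeGroup.inv_mk]; rfl
    rw [h1, map_inv]
    show star ((φ (FreeGroup.of i)).1) = _
    rw [show φ (FreeGroup.of i) = gen i from FreeGroup.lift_apply_of]
    exact star_gen i
  · rw [show FreeGroup.mk [(i, true)] = FreeGroup.of i from rfl,
      show φ (FreeGroup.of i) = gen i from FreeGroup.lift_apply_of]
    rfl

def rv (v : ℤ × ℤ × ℤ) : Fin 3 → ℝ := ![(v.1 : ℝ), (v.2.1 : ℝ), (v.2.2 : ℝ)]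

lemma rmat_mulVec (x : Ltr) (v : ℤ × ℤ × ℤ) : rmat x *ᵥ rv v = rv (iact x v) := by
  obtain ⟨i, e⟩ := x; obtain ⟨a, b, c⟩ := v
  fin_cases i <;> cases e <;>
  · funext j
    fin_cases j <;>
      (simp [rmat, iact, rv, Matrix.mulVec, dotProduct, Fin.sum_univ_three] <;>
        (push_cast; ring))

lemma main (L : List Ltr) :
    (φ (FreeGroup.mk L)).1 *ᵥ rv (0,1,0) = ((5:ℝ)^L.length)⁻¹ • rv (ivec L) := by
  induction L with
  | nil =>
    rw [← FreeGroup.one_eq_mk, _root_.map_one, OneMemClass.coe_one, Matrix.one_mulVec]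
    simp [ivec]
  | cons x L ih =>
    have hmk : FreeGroup.mk (x :: L) = FreeGroup.mk [x] * FreeGroup.mk L :=
      by rw [FreeGroup.mul_mk]; rfl
    rw [hmk, _root_.map_mul, MulMemClass.coe_mul, ← Matrix.mulVec_mulVec, ih, gen_eq,
      Matrix.smul_mulVec, Matrix.mulVec_smul, rmat_mulVec]
    rw [smul_smul, ← mul_inv, List.length_cons, pow_succ, mul_comm,
      show ivec (x :: L) = iact x (ivec L) from rfl]

lemma phi_inj : Function.Injective φ := by
  rw [injective_iff_map_eq_one]
  intro w hw
  by_contra hne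
  have hred : FreeGroup.reduce w.toWord = w.toWord := FreeGroup.reduce_toWord w
  have hmk : FreeGroup.mk w.toWord = w := FreeGroup.mk_toWord
  have hnil : w.toWord ≠ [] := fun h => hne (FreeGroup.toWord_eq_nil_iff.mp h)
  obtain ⟨x, L', hL⟩ := List.exists_cons_of_ne_nil hnil
  have h1 := main w.toWord
  rw [hmk, hw, OneMemClass.coe_one, Matrix.one_mulVec] at h1
  have h2 := congrFun h1 1
  simp only [rv, Pi.smul_apply, smul_eq_mul] at h2
  norm_num at h2
  -- h2 : 1 = (5 ^ n)⁻¹ * b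
  set n := w.toWord.length with hn
  set b := (ivec w.toWord).2.1 with hb
  have h5 : (0:ℝ) < 5 ^ n := by positivity
  have hbr : (b : ℝ) = 5 ^ n := by
    field_simp at h2
    linarith [h2]
  have hbz : b = 5 ^ n := by exact_mod_cast hbr
  have hinv := key L' x (hL ▸ hred)
  rw [← hL] at hinv
  have hbne := hinv.b_ne
  have : ((b : ZMod 5)) ≠ 0 := hbne
  rw [hbz] at this
  apply this
  have hn1 : n ≠ 0 := by rw [hn, hL]; simp
  push_cast
  rw [show ((5:ZMod 5)) = 0 from rfl, zero_pow hn1]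

end SO3Free

/-- `SO(3)` contains a subgroup that is free of rank 2. -/
theorem so3_has_free_subgroup_rank_two :
    ∃ H : Subgroup SO3, Nonempty (H ≃* FreeGroup (Fin 2)) :=
  ⟨SO3Free.φ.range, ⟨(MonoidHom.ofInjective SO3Free.phi_inj).symm⟩⟩
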